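/- arXiv:2401.01457 — 4 statements merged into one kernel-verified Lean document; each statement's English description precedes it below -/
import Mathlib

section
/- Let d be an odd positive integer and let ℓ₁,…,ℓ_d be a sequence of even positive integers with product V = ℓ₁⋯ℓ_d. Let C be the self-complementary ideal C = {(a₁,…,a_d) ∈ [ℓ₁]×⋯×[ℓ_d] : #{i : aᵢ ≤ ℓᵢ/2} > d/2}. Then for every self-complementary ideal I of [ℓ₁]×⋯×[ℓ_d], |I \ C| ≤ (1/4 − (1/2^(d+1))·C(d−1, (d−1)/2))·V, where C(·,·) is the binomial coefficient. Consequently the radius of the flip graph G(ℓ₁,…,ℓ_d) is at most (1/4 − (1/2^(d+1))·C(d−1, (d−1)/2))·V, and the vertex C achieves this eccentricity bound. -/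
open Finset

/-- An ideal (downward-closed subset, possibly empty) of a finite poset. -/
def IsIdeal {P : Type*} [PartialOrder P] (I : Finset P) : Prop :=
  ∀ a ∈ I, ∀ b, b ≤ a → b ∈ I

/-- A self-complementary ideal with respect to an involution `φ`. -/
def IsSCIdeal {P : Type*} [PartialOrder P] (φ : P → P) (I : Finset P) : Prop :=
  IsIdeal I ∧ ∀ a, a ∈ I ↔ φ a ∉ I

/-- The flip graph on self-complementary ideals: two ideals are adjacent when they
differ in exactly one element each way. -/
def FlipGraph {P : Type*} [PartialOrder P] [DecidableEq P] (φ : P → P) :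
    SimpleGraph {I : Finset P // IsSCIdeal φ I} where
  Adj I J := I ≠ J ∧ (I.1 \ J.1).card = 1 ∧ (J.1 \ I.1).card = 1
  symm := ⟨fun _ _ h => ⟨h.1.symm, h.2.2, h.2.1⟩⟩
  loopless := ⟨fun _ h => h.1 rfl⟩

/-- Eccentricity of a vertex: its maximum distance to any vertex. -/
noncomputable def eccentricity {V : Type*} (G : SimpleGraph V) (v : V) : ℕ :=
  ⨆ u, G.dist v u

/-- Diameter of a graph: the maximum eccentricity. -/
noncomputable def graphDiam {V : Type*} (G : SimpleGraph V) : ℕ :=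
  ⨆ v, eccentricity G v

/-- Radius of a graph: the minimum eccentricity. -/
noncomputable def graphRadius {V : Type*} (G : SimpleGraph V) : ℕ :=
  ⨅ v, eccentricity G v

/-- The order-reversing involution `aᵢ ↦ ℓᵢ + 1 - aᵢ` on a product of chains
(0-indexed via `Fin.rev`). -/
def chainRev {d : ℕ} (ℓ : Fin d → ℕ) (a : ∀ i, Fin (ℓ i)) : ∀ i, Fin (ℓ i) :=
  fun i => (a i).rev

/-- The ideal `{a : #{i : aᵢ ≤ ℓᵢ/2} > d/2}` (in 0-indexed coordinates,
`aᵢ ≤ ℓᵢ/2` becomes `2(aᵢ + 1) ≤ ℓᵢ`, and `card > d/2` becomes `d < 2·card`). -/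
def majorityIdeal (d : ℕ) (ℓ : Fin d → ℕ) : Finset (∀ i, Fin (ℓ i)) :=
  Finset.univ.filter (fun a =>
    d < 2 * (Finset.univ.filter (fun i : Fin d => 2 * ((a i : ℕ) + 1) ≤ ℓ i)).card)

section Count

variable {d : ℕ} {ℓ : Fin d → ℕ}

/-- the set of "low" coordinates -/
def lowSet (ℓ : Fin d → ℕ) (a : ∀ i, Fin (ℓ i)) : Finset (Fin d) :=
  Finset.univ.filter (fun i : Fin d => 2 * ((a i : ℕ) + 1) ≤ ℓ i)

lemma mem_lowSet {a : ∀ i, Fin (ℓ i)} {i : Fin d} :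
    i ∈ lowSet ℓ a ↔ 2 * ((a i : ℕ) + 1) ≤ ℓ i := by simp [lowSet]

lemma mem_majorityIdeal {a : ∀ i, Fin (ℓ i)} :
    a ∈ majorityIdeal d ℓ ↔ d < 2 * (lowSet ℓ a).card := by
  simp [majorityIdeal, lowSet]

lemma chainRev_chainRev (a : ∀ i, Fin (ℓ i)) : chainRev ℓ (chainRev ℓ a) = a := by
  funext i; simp [chainRev]

lemma chainRev_antitone {a b : ∀ i, Fin (ℓ i)} (h : a ≤ b) :
    chainRev ℓ b ≤ chainRev ℓ a := by
  intro i
  simpa [chainRev, Fin.rev_le_rev] using h i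

lemma lowSet_chainRev (heven : ∀ i, Even (ℓ i)) (a : ∀ i, Fin (ℓ i)) :
    lowSet ℓ (chainRev ℓ a) = (lowSet ℓ a)ᶜ := by
  ext i
  obtain ⟨c, hc⟩ := heven i
  have hlt := (a i).is_lt
  simp only [mem_lowSet, Finset.mem_compl, chainRev, Fin.val_rev]
  omega

lemma majority_SC {m : ℕ} (hm : d = 2 * m + 1) (heven : ∀ i, Even (ℓ i)) :
    IsSCIdeal (chainRev ℓ) (majorityIdeal d ℓ) := by
  constructor
  · intro a ha b hba
    rw [mem_majorityIdeal] at ha ⊢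
    have hsub : lowSet ℓ a ⊆ lowSet ℓ b := by
      intro i hi
      rw [mem_lowSet] at hi ⊢
      have hba' : (b i : ℕ) ≤ a i := hba i
      omega
    have := card_le_card hsub
    omega
  · intro a
    rw [mem_majorityIdeal, mem_majorityIdeal, lowSet_chainRev heven, card_compl,
      Fintype.card_fin]
    have h1 : (lowSet ℓ a).card ≤ d := by
      simpa using card_le_card (subset_univ (lowSet ℓ a))
    omega

lemma two_sum_choose {m : ℕ} :
    2 * (∑ k ∈ Finset.Icc 1 m, (2 * m).choose (k - 1)) + (2 * m).choose m = 2 ^ (2 * m) := by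
  have h1 : ∑ k ∈ Finset.Icc 1 m, (2 * m).choose (k - 1)
      = ∑ j ∈ range m, (2 * m).choose j := by
    rw [← Finset.Ico_add_one_right_eq_Icc, Finset.sum_Ico_eq_sum_range]
    simp
  have h2 := Nat.sum_range_choose (2 * m)
  have h3 : ∑ i ∈ range (2 * m + 1), (2 * m).choose i
      = (∑ i ∈ range (m + 1), (2 * m).choose i)
        + ∑ i ∈ Finset.Ico (m + 1) (2 * m + 1), (2 * m).choose i := by
    rw [range_eq_Ico, range_eq_Ico]
    exact (Finset.sum_Ico_consecutive (fun i => (2 * m).choose i) (Nat.zero_le (m + 1)) (by omega : m + 1 ≤ 2 * m + 1)).symm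
  have h4 : ∑ i ∈ Finset.Ico (m + 1) (2 * m + 1), (2 * m).choose i
      = ∑ j ∈ range m, (2 * m).choose j := by
    rw [Finset.sum_Ico_eq_sum_range]
    have hre : ∀ j ∈ range m, (2 * m).choose (m + 1 + j) = (2 * m).choose (m - 1 - j) := by
      intro j hj
      rw [mem_range] at hj
      have hsymm := Nat.choose_symm (n := 2 * m) (k := m + 1 + j) (by omega)
      have : 2 * m - (m + 1 + j) = m - 1 - j := by omega
      rw [this] at hsymm
      have : 2 * m + 1 - (m + 1) = m := by omega
      rw [← hsymm]
    have : 2 * m + 1 - (m + 1) = m := by omega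
    rw [this, Finset.sum_congr rfl hre, Finset.sum_range_reflect]
  have h5 : ∑ i ∈ range (m + 1), (2 * m).choose i
      = (∑ i ∈ range m, (2 * m).choose i) + (2 * m).choose m := Finset.sum_range_succ _ _
  omega

lemma card_sdiff_major_le {m : ℕ} (hm : d = 2 * m + 1)
    (hpos : ∀ i, 0 < ℓ i) (heven : ∀ i, Even (ℓ i))
    (I : Finset (∀ i, Fin (ℓ i))) (hI : IsSCIdeal (chainRev ℓ) I) :
    (I \ majorityIdeal d ℓ).card ≤
      (∑ k ∈ Finset.Icc 1 m, (2 * m).choose (k - 1)) * ∏ i, (ℓ i / 2) := by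
  classical
  set S := I \ majorityIdeal d ℓ with hS
  set qmap : (∀ i, Fin (ℓ i)) → (∀ i, Fin (ℓ i)) :=
    fun a i => if 2 * ((a i : ℕ) + 1) ≤ ℓ i then a i else (a i).rev with hqmap
  set Qlow : Finset (∀ i, Fin (ℓ i)) :=
    Finset.univ.filter (fun q => ∀ i, 2 * ((q i : ℕ) + 1) ≤ ℓ i) with hQlow
  have hqlow : ∀ (a : ∀ i, Fin (ℓ i)) (i : Fin d), 2 * (((qmap a i) : ℕ) + 1) ≤ ℓ i := by
    intro a i
    obtain ⟨c, hc⟩ := heven i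
    have hlt := (a i).is_lt
    simp only [hqmap]
    split_ifs with h
    · exact h
    · rw [Fin.val_rev]; omega
  have hqle : ∀ (a : ∀ i, Fin (ℓ i)) (i : Fin d), (qmap a i : ℕ) ≤ a i := by
    intro a i
    obtain ⟨c, hc⟩ := heven i
    have hlt := (a i).is_lt
    simp only [hqmap]
    split_ifs with h
    · exact le_rfl
    · rw [Fin.val_rev]; omega
  have hmapsto : ∀ a ∈ S, qmap a ∈ Qlow := by
    intro a _
    simp only [hQlow, mem_filter, mem_univ, true_and]
    exact hqlow a
  rw [card_eq_sum_card_fiberwise hmapsto]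
  have hfiber : ∀ q ∈ Qlow, (S.filter fun a => qmap a = q).card ≤
      ∑ k ∈ Finset.Icc 1 m, (2 * m).choose (k - 1) := by
    intro q hq
    set T := S.filter (fun a => qmap a = q) with hT
    have hTI : ∀ a ∈ T, a ∈ I := by
      intro a ha
      rw [hT, mem_filter, hS, mem_sdiff] at ha
      exact ha.1.1
    have hTmaj : ∀ a ∈ T, a ∉ majorityIdeal d ℓ := by
      intro a ha
      rw [hT, mem_filter, hS, mem_sdiff] at ha
      exact ha.1.2
    have hTq : ∀ a ∈ T, qmap a = q := by
      intro a ha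
      rw [hT, mem_filter] at ha
      exact ha.2
    -- each member has between 1 and m low coordinates
    have hcard_le : ∀ a ∈ T, (lowSet ℓ a).card ≤ m := by
      intro a ha
      have := hTmaj a ha
      rw [mem_majorityIdeal] at this
      omega
    have hcard_ge : ∀ a ∈ T, (lowSet ℓ a).Nonempty := by
      intro a ha
      rw [nonempty_iff_ne_empty]
      intro hemp
      have hrevle : chainRev ℓ a ≤ a := by
        intro i
        have hnotlow : ¬ (2 * ((a i : ℕ) + 1) ≤ ℓ i) := by
          intro hlow
          have : i ∈ lowSet ℓ a := mem_lowSet.mpr hlow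
          rw [hemp] at this
          exact absurd this (Finset.notMem_empty i)
        obtain ⟨c, hc⟩ := heven i
        have hlt := (a i).is_lt
        rw [Fin.le_def, chainRev, Fin.val_rev]
        omega
      have haI := hTI a ha
      exact ((hI.2 a).mp haI) (hI.1 a haI _ hrevle)
    -- lowSet is injective on the fiber
    have hinj : ∀ a ∈ T, ∀ b ∈ T, lowSet ℓ a = lowSet ℓ b → a = b := by
      intro a ha b hb hlow
      have hqab : qmap a = qmap b := by rw [hTq a ha, hTq b hb]
      funext i
      have hqi : qmap a i = qmap b i := congrFun hqab i
      by_cases hla : 2 * ((a i : ℕ) + 1) ≤ ℓ i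
      · have hlb : i ∈ lowSet ℓ b := hlow ▸ mem_lowSet.mpr hla
        rw [mem_lowSet] at hlb
        simpa only [hqmap, if_pos hla, if_pos hlb] using hqi
      · have hlb : i ∉ lowSet ℓ b := hlow ▸ (fun h => hla (mem_lowSet.mp h))
        rw [mem_lowSet] at hlb
        have := hqi
        simp only [hqmap, if_neg hla, if_neg hlb] at this
        exact Fin.rev_inj.mp this
    have hcardT : T.card = (T.image (lowSet ℓ)).card :=
      (Finset.card_image_of_injOn (fun a ha b hb h => hinj a ha b hb h)).symm
    rw [hcardT]
    set 𝒜 := T.image (lowSet ℓ) with h𝒜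
    have h𝒜mem : ∀ A ∈ 𝒜, A.card ∈ Finset.Icc 1 m := by
      intro A hA
      rw [h𝒜, Finset.mem_image] at hA
      obtain ⟨a, ha, rfl⟩ := hA
      rw [Finset.mem_Icc]
      exact ⟨Finset.card_pos.mpr (hcard_ge a ha), hcard_le a ha⟩
    rw [card_eq_sum_card_fiberwise h𝒜mem]
    apply Finset.sum_le_sum
    intro k hk
    rw [Finset.mem_Icc] at hk
    -- EKR on the layer
    have hEKR := Finset.erdos_ko_rado (n := d)
      (𝒜 := 𝒜.filter (fun A => A.card = k)) (r := k)
      ?_ ?_ ?_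
    · calc (𝒜.filter (fun A => A.card = k)).card ≤ (d - 1).choose (k - 1) := hEKR
        _ = (2 * m).choose (k - 1) := by
            congr 1
            omega
    · -- intersecting
      intro A hA B hB hdisj
      simp only [Finset.coe_filter, Set.mem_setOf_eq, Finset.mem_coe] at hA hB
      obtain ⟨hA𝒜, _⟩ := hA
      obtain ⟨hB𝒜, _⟩ := hB
      rw [h𝒜, Finset.mem_image] at hA𝒜 hB𝒜
      obtain ⟨a, ha, rfl⟩ := hA𝒜
      obtain ⟨b, hb, rfl⟩ := hB𝒜
      have hqab : qmap a = qmap b := by rw [hTq a ha, hTq b hb]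
      have hrev : chainRev ℓ a ≤ b := by
        intro i
        have hqi : qmap a i = qmap b i := congrFun hqab i
        by_cases hla : 2 * ((a i : ℕ) + 1) ≤ ℓ i
        · have hla' : i ∈ lowSet ℓ a := mem_lowSet.mpr hla
          have hlb : i ∉ lowSet ℓ b := Finset.disjoint_left.mp hdisj hla'
          rw [mem_lowSet] at hlb
          have : (a i) = (b i).rev := by
            simpa only [hqmap, if_pos hla, if_neg hlb] using hqi
          rw [chainRev, this, Fin.rev_rev]
        · have : (a i).rev = qmap b i := by
            simpa only [hqmap, if_neg hla] using hqi
          rw [chainRev, this, Fin.le_def]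
          exact hqle b i
      have haI := hTI a ha
      have hbI := hTI b hb
      exact ((hI.2 a).mp haI) (hI.1 b hbI _ hrev)
    · -- sized
      intro A hA
      simp only [Finset.coe_filter, Set.mem_setOf_eq, Finset.mem_coe] at hA
      exact hA.2
    · omega
  calc ∑ q ∈ Qlow, (S.filter fun a => qmap a = q).card
      ≤ ∑ q ∈ Qlow, ∑ k ∈ Finset.Icc 1 m, (2 * m).choose (k - 1) :=
        Finset.sum_le_sum hfiber
    _ = Qlow.card * ∑ k ∈ Finset.Icc 1 m, (2 * m).choose (k - 1) := by
        rw [Finset.sum_const, smul_eq_mul]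
    _ = (∑ k ∈ Finset.Icc 1 m, (2 * m).choose (k - 1)) * ∏ i, (ℓ i / 2) := by
        rw [mul_comm]
        congr 1
        -- Qlow.card = ∏ (ℓ i / 2)
        have key1 : ∀ q ∈ Qlow, ∀ i, ((q i : ℕ)) < ℓ i / 2 := by
          intro q hq i
          have h := (mem_filter.mp hq).2 i
          omega
        have key2 : ∀ (x : ∀ i, Fin (ℓ i / 2)) (i : Fin d), 2 * ((x i : ℕ) + 1) ≤ ℓ i := by
          intro x i
          obtain ⟨c, hc⟩ := heven i
          have := (x i).is_lt
          omega
        have this : Qlow.card = Fintype.card (∀ i, Fin (ℓ i / 2)) := by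
          rw [← Finset.card_univ]
          exact Finset.card_bij' (fun q hq i => ⟨(q i : ℕ), key1 q hq i⟩)
            (fun x _ i => ⟨(x i : ℕ), lt_of_lt_of_le (x i).is_lt (Nat.div_le_self _ _)⟩)
            (fun q hq => mem_univ _)
            (fun x hx => mem_filter.mpr ⟨mem_univ _, key2 x⟩)
            (fun q hq => by funext i; rfl)
            (fun x hx => by funext i; rfl)
        rw [this, Fintype.card_pi]
        congr 1
        funext i
        exact Fintype.card_fin _

end Count

section Walk

variable {P : Type*} [PartialOrder P] [DecidableEq P] {φ : P → P}

lemma exists_flip_walk (hinv : ∀ x, φ (φ x) = x)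
    (hanti : ∀ {x y : P}, x ≤ y → φ y ≤ φ x) :
    ∀ (n : ℕ) (I J : Finset P) (hI : IsSCIdeal φ I) (hJ : IsSCIdeal φ J),
      (I \ J).card ≤ n →
      ∃ p : (FlipGraph φ).Walk ⟨I, hI⟩ ⟨J, hJ⟩, p.length ≤ n := by
  intro n
  induction n with
  | zero =>
    intro I J hI hJ hcard
    have hsub : I ⊆ J := by
      intro x hx
      by_contra hx'
      have hmem : x ∈ I \ J := mem_sdiff.mpr ⟨hx, hx'⟩
      have := card_pos.mpr ⟨x, hmem⟩
      omega
    have hIJ : I = J := by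
      apply Finset.Subset.antisymm hsub
      intro x hx
      by_contra hx'
      have h1 : φ x ∉ J := (hJ.2 x).mp hx
      have h2 : φ x ∈ I := by
        by_contra h3
        exact hx' ((hI.2 x).mpr h3)
      exact h1 (hsub h2)
    have hv : (⟨I, hI⟩ : {I : Finset P // IsSCIdeal φ I}) = ⟨J, hJ⟩ := Subtype.ext hIJ
    rw [← hv]
    exact ⟨SimpleGraph.Walk.nil, Nat.le_refl 0⟩
  | succ n ih =>
    intro I J hI hJ hcard
    by_cases hle : (I \ J).card ≤ n
    · obtain ⟨p, hp⟩ := ih I J hI hJ hle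
      exact ⟨p, hp.trans (Nat.le_succ n)⟩
    have hne : (I \ J).Nonempty := by
      rw [← card_pos]; omega
    obtain ⟨a, haIJ, hamax⟩ := Set.Finite.exists_maximalFor id (↑(I \ J) : Set P)
      (I \ J).finite_toSet (by exact_mod_cast hne)
    simp only [Finset.mem_coe, mem_sdiff] at haIJ
    obtain ⟨haI, haJ⟩ := haIJ
    have hfa_nI : φ a ∉ I := (hI.2 a).mp haI
    have hfa_J : φ a ∈ J := (hJ.2 (φ a)).mpr (by rw [hinv]; exact haJ)
    have hne_afa : a ≠ φ a := fun h => hfa_nI (h ▸ haI)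
    have hmax' : ∀ b ∈ I, a ≤ b → b = a ∨ b ∈ J := by
      intro b hb hab
      by_cases hbJ : b ∈ J
      · exact Or.inr hbJ
      · exact Or.inl (le_antisymm (hamax (by simp only [Finset.mem_coe, mem_sdiff]; exact ⟨hb, hbJ⟩) hab) hab)
    have hnotle : ¬ a ≤ φ a := fun h => haJ (hJ.1 _ hfa_J a h)
    set I' : Finset P := insert (φ a) (I.erase a) with hI'def
    have ha_nI' : a ∉ I' := by
      simp [hI'def, mem_insert, mem_erase, hne_afa]
    have hfa_I' : φ a ∈ I' := mem_insert_self _ _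
    have hId' : IsIdeal I' := by
      intro c hc b hbc
      rcases mem_insert.mp hc with hc | hc
      · subst hc
        have hafb : a ≤ φ b := by
          have := hanti hbc
          rwa [hinv] at this
        by_cases hfb : φ b ∈ I
        · rcases hmax' (φ b) hfb hafb with h | h
          · have hbfa : b = φ a := by rw [← hinv b, h]
            rw [hbfa]; exact mem_insert_self _ _
          · have hbJ : b ∈ J := hJ.1 (φ a) hfa_J b hbc
            exact absurd h ((hJ.2 b).mp hbJ)
        · have hbI : b ∈ I := (hI.2 b).mpr hfb
          have hba : b ≠ a := by rintro rfl; exact hnotle hbc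
          exact mem_insert_of_mem (mem_erase.mpr ⟨hba, hbI⟩)
      · obtain ⟨hca, hcI⟩ := mem_erase.mp hc
        have hbI : b ∈ I := hI.1 c hcI b hbc
        by_cases hba : b = a
        · subst hba
          rcases hmax' c hcI hbc with h | h
          · exact absurd h hca
          · exact absurd (hJ.1 c h b hbc) haJ
        · exact mem_insert_of_mem (mem_erase.mpr ⟨hba, hbI⟩)
    have hSC' : IsSCIdeal φ I' := by
      refine ⟨hId', fun x => ?_⟩
      by_cases hx1 : x = a
      · subst hx1
        exact iff_of_false ha_nI' (by simpa using hfa_I')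
      by_cases hx2 : x = φ a
      · subst hx2
        refine iff_of_true hfa_I' ?_
        rw [hinv]; exact ha_nI'
      · have hfx1 : φ x ≠ φ a := fun h => hx1 (by rw [← hinv x, h, hinv])
        have hfx2 : φ x ≠ a := fun h => hx2 (by rw [← hinv x, h])
        have e1 : x ∈ I' ↔ x ∈ I := by
          simp [hI'def, mem_insert, mem_erase, hx1, hx2]
        have e2 : φ x ∈ I' ↔ φ x ∈ I := by
          simp [hI'def, mem_insert, mem_erase, hfx1, hfx2]
        rw [e1, e2]
        exact hI.2 x
    have hadj : (FlipGraph φ).Adj ⟨I, hI⟩ ⟨I', hSC'⟩ := by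
      refine ⟨?_, ?_, ?_⟩
      · intro h
        have : I = I' := congrArg Subtype.val h
        exact ha_nI' (this ▸ haI)
      · have : I \ I' = {a} := by
          ext x
          simp only [mem_sdiff, mem_singleton, hI'def, mem_insert, mem_erase]
          constructor
          · rintro ⟨hxI, hxI'⟩
            by_contra hxa
            exact hxI' (Or.inr ⟨hxa, hxI⟩)
          · rintro rfl
            refine ⟨haI, ?_⟩
            push_neg
            exact ⟨hne_afa, fun h => absurd rfl h⟩
        rw [this, card_singleton]
      · have : I' \ I = {φ a} := by
          ext x
          simp only [mem_sdiff, mem_singleton, hI'def, mem_insert, mem_erase]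
          constructor
          · rintro ⟨hx, hxI⟩
            rcases hx with h | ⟨_, h⟩
            · exact h
            · exact absurd h hxI
          · rintro rfl
            exact ⟨Or.inl rfl, hfa_nI⟩
        rw [this, card_singleton]
    have hsd : I' \ J = (I \ J).erase a := by
      ext x
      simp only [mem_sdiff, mem_erase, hI'def, mem_insert, mem_erase]
      constructor
      · rintro ⟨hx, hxJ⟩
        rcases hx with rfl | ⟨hxa, hxI⟩
        · exact absurd hfa_J hxJ
        · exact ⟨hxa, hxI, hxJ⟩
      · rintro ⟨hxa, hxI, hxJ⟩
        exact ⟨Or.inr ⟨hxa, hxI⟩, hxJ⟩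
    have hcard' : (I' \ J).card ≤ n := by
      rw [hsd, card_erase_of_mem (mem_sdiff.mpr ⟨haI, haJ⟩)]
      omega
    obtain ⟨p, hp⟩ := ih I' J hSC' hJ hcard'
    exact ⟨SimpleGraph.Walk.cons hadj p, by simpa using Nat.succ_le_succ hp⟩

end Walk

/-- For `d` odd and all `ℓᵢ` even, the majority ideal `C` is self-complementary, every
self-complementary ideal `I` satisfies
`2^(d+1) · |I \ C| ≤ (2^(d-1) - C(d-1, (d-1)/2)) · V`; consequently the radius of the
flip graph is at most `(1/4 - 2^{-(d+1)} C(d-1,(d-1)/2)) · V`, and the vertex `C`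
achieves this eccentricity bound. -/
theorem flipGraph_radius_upper_bound_odd (d : ℕ) (hd : Odd d) (ℓ : Fin d → ℕ)
    (hpos : ∀ i, 0 < ℓ i) (heven : ∀ i, Even (ℓ i)) :
    IsSCIdeal (chainRev ℓ) (majorityIdeal d ℓ) ∧
    (∀ I : Finset (∀ i, Fin (ℓ i)), IsSCIdeal (chainRev ℓ) I →
      2 ^ (d + 1) * (I \ majorityIdeal d ℓ).card ≤
        (2 ^ (d - 1) - Nat.choose (d - 1) ((d - 1) / 2)) * ∏ i, ℓ i) ∧
    2 ^ (d + 1) * graphRadius (FlipGraph (chainRev ℓ)) ≤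
      (2 ^ (d - 1) - Nat.choose (d - 1) ((d - 1) / 2)) * ∏ i, ℓ i ∧
    (∀ hC : IsSCIdeal (chainRev ℓ) (majorityIdeal d ℓ),
      2 ^ (d + 1) * eccentricity (FlipGraph (chainRev ℓ)) ⟨majorityIdeal d ℓ, hC⟩ ≤
        (2 ^ (d - 1) - Nat.choose (d - 1) ((d - 1) / 2)) * ∏ i, ℓ i) := by

  classical
  obtain ⟨m, hm0⟩ := hd
  have hm : d = 2 * m + 1 := by omega
  set B := ∑ k ∈ Finset.Icc 1 m, (2 * m).choose (k - 1) with hB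
  set Q := ∏ i, (ℓ i / 2) with hQ
  have hprod : ∏ i, ℓ i = 2 ^ d * Q := by
    rw [show (2:ℕ) ^ d = ∏ _i : Fin d, 2 by
      rw [Finset.prod_const, card_univ, Fintype.card_fin]]
    rw [hQ, ← Finset.prod_mul_distrib]
    apply Finset.prod_congr rfl
    intro i _
    obtain ⟨c, hc⟩ := heven i
    omega
  have hBid : 2 * B + (2 * m).choose m = 2 ^ (2 * m) := two_sum_choose
  have harith : 2 ^ (d + 1) * (B * Q) =
      (2 ^ (d - 1) - Nat.choose (d - 1) ((d - 1) / 2)) * ∏ i, ℓ i := by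
    have h1 : d - 1 = 2 * m := by omega
    have h2 : (d - 1) / 2 = m := by omega
    have h3 : (2:ℕ) ^ (2 * m) - (2 * m).choose m = 2 * B := by omega
    rw [h2, h1, hprod, h3, pow_succ]
    ring
  have hC := majority_SC (ℓ := ℓ) hm heven
  have hkey : ∀ I : Finset (∀ i, Fin (ℓ i)), IsSCIdeal (chainRev ℓ) I →
      (I \ majorityIdeal d ℓ).card ≤ B * Q :=
    fun I hI => card_sdiff_major_le hm hpos heven I hI
  have hecc : ∀ hC' : IsSCIdeal (chainRev ℓ) (majorityIdeal d ℓ),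
      eccentricity (FlipGraph (chainRev ℓ)) ⟨majorityIdeal d ℓ, hC'⟩ ≤ B * Q := by
    intro hC'
    haveI : Nonempty {I : Finset (∀ i, Fin (ℓ i)) // IsSCIdeal (chainRev ℓ) I} :=
      ⟨⟨_, hC'⟩⟩
    apply ciSup_le
    intro u
    rw [SimpleGraph.dist_comm]
    obtain ⟨p, hp⟩ := exists_flip_walk (φ := chainRev ℓ)
      chainRev_chainRev (fun h => chainRev_antitone h)
      ((u.1 \ majorityIdeal d ℓ).card) u.1 (majorityIdeal d ℓ) u.2 hC' le_rfl
    exact le_trans (SimpleGraph.dist_le p) (le_trans hp (hkey u.1 u.2))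
  refine ⟨hC, ?_, ?_, ?_⟩
  · intro I hI
    calc 2 ^ (d + 1) * (I \ majorityIdeal d ℓ).card
        ≤ 2 ^ (d + 1) * (B * Q) := Nat.mul_le_mul_left _ (hkey I hI)
      _ = _ := harith
  · have hrad : graphRadius (FlipGraph (chainRev ℓ)) ≤
        eccentricity (FlipGraph (chainRev ℓ)) ⟨majorityIdeal d ℓ, hC⟩ :=
      ciInf_le (OrderBot.bddBelow _) _
    calc 2 ^ (d + 1) * graphRadius (FlipGraph (chainRev ℓ))
        ≤ 2 ^ (d + 1) * (B * Q) := Nat.mul_le_mul_left _ (le_trans hrad (hecc hC))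
      _ = _ := harith
  · intro hC'
    calc 2 ^ (d + 1) * eccentricity (FlipGraph (chainRev ℓ)) ⟨majorityIdeal d ℓ, hC'⟩
        ≤ 2 ^ (d + 1) * (B * Q) := Nat.mul_le_mul_left _ (hecc hC')
      _ = _ := harith
end

section
/- Let H be the following set of ten 3-element subsets of {1,2,3,4,5,6}: {1,2,3}, {1,2,4}, {1,3,6}, {1,4,5}, {1,5,6}, {2,3,5}, {2,4,6}, {2,5,6}, {3,4,6}, {3,4,5}, and let D = H ∪ {A ⊆ {1,…,6} : |A| = 2}. Then every family F ⊆ D in which any two members share a common element satisfies |F| ≤ 10. -/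
def Hten : Finset (Finset (Fin 6)) :=
  {{0, 1, 2}, {0, 1, 3}, {0, 2, 5}, {0, 3, 4}, {0, 4, 5},
   {1, 2, 4}, {1, 3, 5}, {1, 4, 5}, {2, 3, 5}, {2, 3, 4}}

set_option maxRecDepth 10000 in
theorem star_key : ∀ v : Fin 6, ∀ S : Finset (Fin 6), v ∉ S →
    S.card ≤ (Hten.filter (fun T => ∃ x ∈ S, v ∉ T ∧ x ∉ T)).card := by decide

set_option maxRecDepth 10000 in
theorem tri_key : ∀ a b c : Fin 6, a ≠ b → a ≠ c → b ≠ c →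
    3 ≤ (Hten.filter (fun T => T ∩ {a,b} = ∅ ∨ T ∩ {b,c} = ∅ ∨ T ∩ {a,c} = ∅)).card := by
  decide

lemma pair_of_mem {P : Finset (Fin 6)} (h2 : P.card = 2) {u : Fin 6} (hu : u ∈ P) :
    ∃ w, w ≠ u ∧ P = {u, w} := by
  obtain ⟨x, y, hxy, rfl⟩ := Finset.card_eq_two.mp h2
  rcases Finset.mem_insert.mp hu with rfl | hy
  · exact ⟨y, fun h => hxy h.symm, rfl⟩
  · rcases Finset.mem_singleton.mp hy with rfl
    exact ⟨x, hxy, Finset.pair_comm x u⟩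

lemma star_case (v : Fin 6) (Q : Finset (Finset (Fin 6)))
    (hQ2 : ∀ P ∈ Q, P.card = 2) (hv : ∀ P ∈ Q, v ∈ P) :
    Q.card ≤ (Hten.filter (fun T => ∃ P ∈ Q, T ∩ P = ∅)).card := by
  classical
  set f : Finset (Fin 6) → Fin 6 :=
    fun P => if h : (P.erase v).Nonempty then (P.erase v).min' h else v with hf
  have hfP : ∀ P ∈ Q, f P ∈ P.erase v := by
    intro P hP
    have hne : (P.erase v).Nonempty := by
      rw [← Finset.card_pos, Finset.card_erase_of_mem (hv P hP), hQ2 P hP]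
      norm_num
    simpa [hf, hne] using (P.erase v).min'_mem hne
  have hPeq : ∀ P ∈ Q, P = {v, f P} := by
    intro P hP
    have h1 := hfP P hP
    have hne : f P ≠ v := Finset.ne_of_mem_erase h1
    have hmem : f P ∈ P := Finset.mem_of_mem_erase h1
    have hsub : ({v, f P} : Finset (Fin 6)) ⊆ P := by
      intro z hz
      rcases Finset.mem_insert.mp hz with rfl | hz
      · exact hv P hP
      · rcases Finset.mem_singleton.mp hz with rfl; exact hmem
    have hcard : P.card ≤ ({v, f P} : Finset (Fin 6)).card := by
      rw [hQ2 P hP, Finset.card_pair (Ne.symm hne)]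
    exact (Finset.eq_of_subset_of_card_le hsub hcard).symm
  set S := Q.image f with hS
  have hcardS : S.card = Q.card := by
    apply Finset.card_image_of_injOn
    intro P1 h1 P2 h2 hEq
    rw [hPeq P1 h1, hPeq P2 h2, hEq]
  have hvS : v ∉ S := by
    intro hvmem
    obtain ⟨P, hP, hPv⟩ := Finset.mem_image.mp hvmem
    exact Finset.ne_of_mem_erase (hfP P hP) hPv
  have h1 := star_key v S hvS
  rw [hcardS] at h1
  refine h1.trans (Finset.card_le_card ?_)
  intro T hT
  rw [Finset.mem_filter] at hT ⊢
  obtain ⟨hTH, x, hxS, hvT, hxT⟩ := hT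
  obtain ⟨P, hPQ, rfl⟩ := Finset.mem_image.mp hxS
  refine ⟨hTH, P, hPQ, ?_⟩
  rw [hPeq P hPQ]
  ext z
  simp only [Finset.mem_inter, Finset.mem_insert, Finset.mem_singleton,
    Finset.notMem_empty, iff_false, not_and]
  rintro hzT (rfl | rfl)
  · exact hvT hzT
  · exact hxT hzT

theorem key_count (Q : Finset (Finset (Fin 6)))
    (hQ2 : ∀ P ∈ Q, P.card = 2)
    (hQint : ∀ P ∈ Q, ∀ P' ∈ Q, (P ∩ P').Nonempty) :
    Q.card ≤ (Hten.filter (fun T => ∃ P ∈ Q, T ∩ P = ∅)).card := by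
  classical
  rcases Q.eq_empty_or_nonempty with rfl | ⟨P0, hP0⟩
  · simp
  obtain ⟨a, b, hab, hP0eq⟩ := Finset.card_eq_two.mp (hQ2 P0 hP0)
  subst hP0eq
  by_cases hstarA : ∀ P ∈ Q, a ∈ P
  · exact star_case a Q hQ2 hstarA
  push_neg at hstarA
  obtain ⟨P1, hP1, haP1⟩ := hstarA
  have hbP1 : b ∈ P1 := by
    obtain ⟨z, hz⟩ := hQint P1 hP1 _ hP0
    rw [Finset.mem_inter] at hz
    rcases Finset.mem_insert.mp hz.2 with rfl | hz2
    · exact absurd hz.1 haP1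
    · rcases Finset.mem_singleton.mp hz2 with rfl; exact hz.1
  obtain ⟨c, hcb, hP1eq⟩ := pair_of_mem (hQ2 P1 hP1) hbP1
  have hac : a ≠ c := by
    rintro rfl; apply haP1; rw [hP1eq]; simp
  by_cases hstarB : ∀ P ∈ Q, b ∈ P
  · exact star_case b Q hQ2 hstarB
  push_neg at hstarB
  obtain ⟨P2, hP2, hbP2⟩ := hstarB
  have haP2 : a ∈ P2 := by
    obtain ⟨z, hz⟩ := hQint P2 hP2 _ hP0
    rw [Finset.mem_inter] at hz
    rcases Finset.mem_insert.mp hz.2 with rfl | hz2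
    · exact hz.1
    · rcases Finset.mem_singleton.mp hz2 with rfl; exact absurd hz.1 hbP2
  have hcP2 : c ∈ P2 := by
    obtain ⟨z, hz⟩ := hQint P2 hP2 _ hP1
    rw [Finset.mem_inter, hP1eq] at hz
    rcases Finset.mem_insert.mp hz.2 with rfl | hz2
    · exact absurd hz.1 hbP2
    · rcases Finset.mem_singleton.mp hz2 with rfl; exact hz.1
  have hP2eq : P2 = {a, c} := by
    have hsub : ({a, c} : Finset (Fin 6)) ⊆ P2 := by
      intro z hz
      rcases Finset.mem_insert.mp hz with rfl | hz
      · exact haP2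
      · rcases Finset.mem_singleton.mp hz with rfl; exact hcP2
    have hcard : P2.card ≤ ({a, c} : Finset (Fin 6)).card := by
      rw [hQ2 P2 hP2, Finset.card_pair hac]
    exact (Finset.eq_of_subset_of_card_le hsub hcard).symm
  -- Q is contained in the triangle {a,b},{b,c},{a,c}
  have hQsub : Q ⊆ {({a, b} : Finset (Fin 6)), {b, c}, {a, c}} := by
    intro P hP
    simp only [Finset.mem_insert, Finset.mem_singleton]
    by_cases haP : a ∈ P
    · obtain ⟨w, hwa, hPeq⟩ := pair_of_mem (hQ2 P hP) haP
      obtain ⟨z, hz⟩ := hQint P hP _ hP1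
      rw [Finset.mem_inter, hP1eq] at hz
      have hzw : z = w := by
        have hz1 := hz.1
        rw [hPeq] at hz1
        rcases Finset.mem_insert.mp hz1 with rfl | hz1
        · rcases Finset.mem_insert.mp hz.2 with rfl | hz2
          · exact absurd rfl hab
          · rcases Finset.mem_singleton.mp hz2 with rfl; exact absurd rfl hac
        · exact Finset.mem_singleton.mp hz1
      rcases Finset.mem_insert.mp hz.2 with h | h
      · left; rw [hPeq, ← hzw, h]
      · right; right; rw [hPeq, ← hzw, Finset.mem_singleton.mp h]
    · have hbP : b ∈ P := by
        obtain ⟨z, hz⟩ := hQint P hP _ hP0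
        rw [Finset.mem_inter] at hz
        rcases Finset.mem_insert.mp hz.2 with rfl | hz2
        · exact absurd hz.1 haP
        · rcases Finset.mem_singleton.mp hz2 with rfl; exact hz.1
      have hcP : c ∈ P := by
        obtain ⟨z, hz⟩ := hQint P hP _ hP2
        rw [Finset.mem_inter, hP2eq] at hz
        rcases Finset.mem_insert.mp hz.2 with rfl | hz2
        · exact absurd hz.1 haP
        · rcases Finset.mem_singleton.mp hz2 with rfl; exact hz.1
      right; left
      have hsub : ({b, c} : Finset (Fin 6)) ⊆ P := by
        intro z hz
        rcases Finset.mem_insert.mp hz with rfl | hz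
        · exact hbP
        · rcases Finset.mem_singleton.mp hz with rfl; exact hcP
      have hcard : P.card ≤ ({b, c} : Finset (Fin 6)).card := by
        rw [hQ2 P hP, Finset.card_pair (Ne.symm hcb)]
      exact (Finset.eq_of_subset_of_card_le hsub hcard).symm
  have hQcard : Q.card ≤ 3 := by
    refine (Finset.card_le_card hQsub).trans ?_
    refine (Finset.card_insert_le _ _).trans ?_
    refine Nat.succ_le_succ ?_
    refine (Finset.card_insert_le _ _).trans ?_
    simp
  have hbc : b ≠ c := Ne.symm hcb
  have h3 := tri_key a b c hab hac hbc
  refine hQcard.trans (h3.trans (Finset.card_le_card ?_))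
  intro T hT
  rw [Finset.mem_filter] at hT ⊢
  refine ⟨hT.1, ?_⟩
  rcases hT.2 with h | h | h
  · exact ⟨{a, b}, hP0, h⟩
  · exact ⟨{b, c}, hP1eq ▸ hP1, h⟩
  · exact ⟨{a, c}, hP2eq ▸ hP2, h⟩

/-- Let `H` be the given ten 3-element subsets of `{1,…,6}` (represented here as
`{0,…,5}` via `i ↦ i - 1`) and `D = H ∪ {A : |A| = 2}`. Then every intersecting
family `F ⊆ D` has at most 10 members. -/
theorem intersecting_family_le_ten
    (F : Finset (Finset (Fin 6)))
    (hFD : F ⊆ ({{0, 1, 2}, {0, 1, 3}, {0, 2, 5}, {0, 3, 4}, {0, 4, 5},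
        {1, 2, 4}, {1, 3, 5}, {1, 4, 5}, {2, 3, 5}, {2, 3, 4}} : Finset (Finset (Fin 6))) ∪
      Finset.univ.filter (fun A : Finset (Fin 6) => A.card = 2))
    (hint : ∀ A ∈ F, ∀ B ∈ F, (A ∩ B).Nonempty) :
    F.card ≤ 10 := by
  classical
  have hHD : ({{0, 1, 2}, {0, 1, 3}, {0, 2, 5}, {0, 3, 4}, {0, 4, 5},
      {1, 2, 4}, {1, 3, 5}, {1, 4, 5}, {2, 3, 5}, {2, 3, 4}} : Finset (Finset (Fin 6))) = Hten :=
    rfl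
  rw [hHD] at hFD
  set F3 := F.filter (fun A => A ∈ Hten) with hF3
  set F2 := F.filter (fun A => A ∉ Hten) with hF2
  have hsplit : F3.card + F2.card = F.card := Finset.card_filter_add_card_filter_not _
  have hF3H : F3 ⊆ Hten := by
    intro A hA; exact (Finset.mem_filter.mp hA).2
  have hF2props : ∀ P ∈ F2, P.card = 2 := by
    intro P hP
    have hPF := (Finset.mem_filter.mp hP).1
    have hPnH := (Finset.mem_filter.mp hP).2
    rcases Finset.mem_union.mp (hFD hPF) with h | h
    · exact absurd h hPnH
    · exact (Finset.mem_filter.mp h).2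
  have hF2int : ∀ P ∈ F2, ∀ P' ∈ F2, (P ∩ P').Nonempty := by
    intro P hP P' hP'
    exact hint P (Finset.mem_filter.mp hP).1 P' (Finset.mem_filter.mp hP').1
  have hkey := key_count F2 hF2props hF2int
  have hEsub : Hten.filter (fun T => ∃ P ∈ F2, T ∩ P = ∅) ⊆ Hten \ F3 := by
    intro T hT
    rw [Finset.mem_filter] at hT
    obtain ⟨hTH, P, hPQ, hTP⟩ := hT
    rw [Finset.mem_sdiff]
    refine ⟨hTH, fun hTF3 => ?_⟩
    have hTF : T ∈ F := (Finset.mem_filter.mp hTF3).1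
    have hPF : P ∈ F := (Finset.mem_filter.mp hPQ).1
    have := hint T hTF P hPF
    rw [hTP] at this
    exact Finset.not_nonempty_empty this
  have h2 : F2.card ≤ (Hten \ F3).card := hkey.trans (Finset.card_le_card hEsub)
  have h3 : (Hten \ F3).card = Hten.card - F3.card := Finset.card_sdiff_of_subset hF3H
  have h4 : F3.card ≤ Hten.card := Finset.card_le_card hF3H
  have h5 : Hten.card = 10 := by decide
  omega
end

section
/- Let r ≥ 2 be an integer and let k be a nonnegative integer with k ≤ r−2. Let C = {(a₁,a₂) ∈ [r−k−1]×[r+k] : a₁ + a₂ ≤ r}. Then for every ideal I of [r−k−1]×[r+k] (not necessarily self-complementary), the symmetric difference satisfies |C Δ I| ≤ (r+k)(r−k−1)/2; moreover, equality holds if and only if I is the empty ideal or I is the entire poset [r−k−1]×[r+k]. -/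
open Finset

/-- The self-complementary "staircase" ideal `{(a₁,a₂) ∈ [r-k-1] × [r+k] : a₁ + a₂ ≤ r}`
(in 0-indexed coordinates, `a₁ + a₂ ≤ r` becomes `a₁ + a₂ + 2 ≤ r`). -/
def triangleIdeal (r k : ℕ) : Finset (Fin (r - k - 1) × Fin (r + k)) :=
  Finset.univ.filter (fun p => (p.1 : ℕ) + (p.2 : ℕ) + 2 ≤ r)

namespace TriProof

def psi (r k : ℕ) (p : Fin (r - k - 1) × Fin (r + k)) : Fin (r - k - 1) × Fin (r + k) :=
  ⟨if (p.2 : ℕ) < 2 * (r - 1 - (p.1 : ℕ)) then p.1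
    else ⟨r - k - 2 - (p.1 : ℕ), by have := p.1.isLt; omega⟩,
   ⟨(p.2 : ℕ) - (r - 1 - (p.1 : ℕ)), by have := p.2.isLt; omega⟩⟩

lemma psi_snd (r k : ℕ) (p : Fin (r - k - 1) × Fin (r + k)) :
    ((psi r k p).2 : ℕ) = (p.2 : ℕ) - (r - 1 - (p.1 : ℕ)) := rfl

lemma psi_fst (r k : ℕ) (p : Fin (r - k - 1) × Fin (r + k)) :
    ((psi r k p).1 : ℕ) =
      if (p.2 : ℕ) < 2 * (r - 1 - (p.1 : ℕ)) then (p.1 : ℕ) else r - k - 2 - (p.1 : ℕ) := by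
  by_cases h : (p.2 : ℕ) < 2 * (r - 1 - (p.1 : ℕ)) <;> simp [psi, h]

lemma mem_tri {r k : ℕ} {p : Fin (r - k - 1) × Fin (r + k)} :
    p ∈ triangleIdeal r k ↔ (p.1 : ℕ) + (p.2 : ℕ) + 2 ≤ r := by
  unfold triangleIdeal
  rw [Finset.mem_filter]
  exact ⟨fun h => h.2, fun h => ⟨Finset.mem_univ p, h⟩⟩

lemma le_iff_val {m n : ℕ} (p q : Fin m × Fin n) :
    p ≤ q ↔ (p.1 : ℕ) ≤ (q.1 : ℕ) ∧ (p.2 : ℕ) ≤ (q.2 : ℕ) :=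
  Iff.rfl

lemma eq_iff_val {m n : ℕ} (p q : Fin m × Fin n) :
    p = q ↔ (p.1 : ℕ) = (q.1 : ℕ) ∧ (p.2 : ℕ) = (q.2 : ℕ) := by
  rw [Prod.ext_iff, Fin.ext_iff, Fin.ext_iff]

lemma psi_mem {r k : ℕ} {p : Fin (r - k - 1) × Fin (r + k)}
    (hp : ¬ ((p.1 : ℕ) + (p.2 : ℕ) + 2 ≤ r)) : psi r k p ∈ triangleIdeal r k := by
  rw [mem_tri, psi_fst, psi_snd]
  have h1 := p.1.isLt
  have h2 := p.2.isLt
  split_ifs with h <;> omega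

lemma psi_le (r k : ℕ) (p : Fin (r - k - 1) × Fin (r + k)) : psi r k p ≤ p := by
  rw [le_iff_val, psi_fst, psi_snd]
  have h1 := p.1.isLt
  have h2 := p.2.isLt
  split_ifs with h <;> omega

lemma psi_inj {r k : ℕ} {p q : Fin (r - k - 1) × Fin (r + k)}
    (hp : ¬ ((p.1 : ℕ) + (p.2 : ℕ) + 2 ≤ r)) (hq : ¬ ((q.1 : ℕ) + (q.2 : ℕ) + 2 ≤ r))
    (h : psi r k p = psi r k q) : p = q := by
  rw [eq_iff_val] at h ⊢
  rw [psi_fst, psi_fst, psi_snd, psi_snd] at h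
  obtain ⟨h1, h2⟩ := h
  have hp1 := p.1.isLt
  have hp2 := p.2.isLt
  have hq1 := q.1.isLt
  have hq2 := q.2.isLt
  split_ifs at h1 with ha hb hb <;> omega

end TriProof

/-- For `2 ≤ r` and `k ≤ r - 2`, every ideal `I` of `[r-k-1] × [r+k]` satisfies
`|C Δ I| ≤ (r+k)(r-k-1)/2` where `C` is the staircase ideal, with equality iff `I` is
empty or the entire poset. -/
theorem triangleIdeal_symmDiff_bound (r k : ℕ) (hr : 2 ≤ r) (hk : k ≤ r - 2)
    (I : Finset (Fin (r - k - 1) × Fin (r + k))) (hI : IsIdeal I) :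
    2 * ((triangleIdeal r k \ I) ∪ (I \ triangleIdeal r k)).card ≤ (r + k) * (r - k - 1) ∧
    (2 * ((triangleIdeal r k \ I) ∪ (I \ triangleIdeal r k)).card = (r + k) * (r - k - 1) ↔
      I = ∅ ∨ I = Finset.univ) := by
  classical
  have hm1 : 0 < r - k - 1 := by omega
  have hn1 : 0 < r + k := by omega
  -- |C| = |univ \ C|
  have hrev : (triangleIdeal r k).card = (Finset.univ \ triangleIdeal r k).card := by
    apply Finset.card_nbij' (fun p => (p.1.rev, p.2.rev)) (fun p => (p.1.rev, p.2.rev))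
    · intro a ha
      rw [Finset.mem_coe, TriProof.mem_tri] at ha
      have h1 := a.1.isLt; have h2 := a.2.isLt
      rw [Finset.mem_coe, Finset.mem_sdiff, TriProof.mem_tri]
      refine ⟨Finset.mem_univ _, ?_⟩
      simp only [Fin.val_rev]
      omega
    · intro a ha
      rw [Finset.mem_coe, Finset.mem_sdiff, TriProof.mem_tri] at ha
      have h1 := a.1.isLt; have h2 := a.2.isLt
      rw [Finset.mem_coe, TriProof.mem_tri]
      simp only [Fin.val_rev]
      omega
    · intro a _; simp [Fin.rev_rev]
    · intro a _; simp [Fin.rev_rev]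
  have htot : (Finset.univ \ triangleIdeal r k).card + (triangleIdeal r k).card
      = (r - k - 1) * (r + k) := by
    rw [Finset.card_sdiff_add_card_eq_card (Finset.subset_univ _), Finset.card_univ]
    simp
  have hcard2 : 2 * (triangleIdeal r k).card = (r + k) * (r - k - 1) := by
    rw [mul_comm]
    linarith
  -- the injection F
  set F : Fin (r - k - 1) × Fin (r + k) → Fin (r - k - 1) × Fin (r + k) :=
    fun p => if p ∈ triangleIdeal r k then p else TriProof.psi r k p with hF
  set s : Finset (Fin (r - k - 1) × Fin (r + k)) :=
    (triangleIdeal r k \ I) ∪ (I \ triangleIdeal r k) with hs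
  have hsC : ∀ p, p ∈ s → p ∈ triangleIdeal r k → p ∉ I := by
    intro p hp hpc
    rcases Finset.mem_union.1 hp with h | h
    · exact (Finset.mem_sdiff.1 h).2
    · exact absurd hpc (Finset.mem_sdiff.1 h).2
  have hsI : ∀ p, p ∈ s → p ∉ triangleIdeal r k → p ∈ I := by
    intro p hp hpc
    rcases Finset.mem_union.1 hp with h | h
    · exact absurd (Finset.mem_sdiff.1 h).1 hpc
    · exact (Finset.mem_sdiff.1 h).1
  have hmaps : ∀ p ∈ s, F p ∈ triangleIdeal r k := by
    intro p hp
    by_cases hpc : p ∈ triangleIdeal r k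
    · simpa [hF, hpc] using hpc
    · rw [hF]; simp only [if_neg hpc]
      exact TriProof.psi_mem (fun h => hpc (TriProof.mem_tri.mpr h))
  have hinj : Set.InjOn F (s : Set (Fin (r - k - 1) × Fin (r + k))) := by
    intro p hp q hq hFeq
    rw [Finset.mem_coe] at hp hq
    by_cases hpc : p ∈ triangleIdeal r k <;> by_cases hqc : q ∈ triangleIdeal r k
    · simpa [hF, hpc, hqc] using hFeq
    · exfalso
      rw [hF] at hFeq; simp only [if_pos hpc, if_neg hqc] at hFeq
      have hqI : q ∈ I := hsI q hq hqc
      have hpI : p ∈ I := hI q hqI p (hFeq ▸ TriProof.psi_le r k q)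
      exact hsC p hp hpc hpI
    · exfalso
      rw [hF] at hFeq; simp only [if_pos hqc, if_neg hpc] at hFeq
      have hpI : p ∈ I := hsI p hp hpc
      have hqI : q ∈ I := hI p hpI q (hFeq ▸ TriProof.psi_le r k p)
      exact hsC q hq hqc hqI
    · rw [hF] at hFeq; simp only [if_neg hpc, if_neg hqc] at hFeq
      exact TriProof.psi_inj (fun h => hpc (TriProof.mem_tri.mpr h))
        (fun h => hqc (TriProof.mem_tri.mpr h)) hFeq
  have hle : s.card ≤ (triangleIdeal r k).card :=
    Finset.card_le_card_of_injOn F hmaps hinj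
  constructor
  · linarith
  constructor
  · -- equality → I = ∅ ∨ I = univ
    intro heq
    by_contra hne
    push_neg at hne
    obtain ⟨hne0, hneu⟩ := hne
    obtain ⟨q₀, hq₀⟩ := hne0
    set p2 : Fin (r - k - 1) × Fin (r + k) := (⟨0, hm1⟩, ⟨r - 1, by omega⟩) with hp2def
    set c2 : Fin (r - k - 1) × Fin (r + k) := (⟨0, hm1⟩, ⟨0, by omega⟩) with hc2def
    set c1 : Fin (r - k - 1) × Fin (r + k) := (⟨0, hm1⟩, ⟨r - 2, by omega⟩) with hc1def
    set T : Fin (r - k - 1) × Fin (r + k) := (⟨r - k - 2, by omega⟩, ⟨r + k - 1, by omega⟩)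
      with hTdef
    have hp2sum : ¬ ((p2.1 : ℕ) + (p2.2 : ℕ) + 2 ≤ r) := by
      rw [hp2def]; simp; omega
    have hTsum : ¬ ((T.1 : ℕ) + (T.2 : ℕ) + 2 ≤ r) := by
      rw [hTdef]; simp; omega
    have hpsi_p2 : TriProof.psi r k p2 = c2 := by
      rw [TriProof.eq_iff_val, TriProof.psi_fst, TriProof.psi_snd, hp2def, hc2def]
      simp
      omega
    have hpsi_T : TriProof.psi r k T = c1 := by
      rw [TriProof.eq_iff_val, TriProof.psi_fst, TriProof.psi_snd, hTdef, hc1def]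
      simp
      omega
    have key : ∃ c ∈ triangleIdeal r k, ∀ p ∈ s, F p ≠ c := by
      by_cases hp2I : p2 ∈ I
      · refine ⟨c1, ?_, ?_⟩
        · rw [TriProof.mem_tri, hc1def]; simp; omega
        · intro p hps hFp
          by_cases hpc : p ∈ triangleIdeal r k
          · rw [hF] at hFp; simp only [if_pos hpc] at hFp
            have hc1I : c1 ∈ I := by
              refine hI p2 hp2I c1 ?_
              rw [TriProof.le_iff_val, hc1def, hp2def]
              simp
              omega
            exact hsC p hps hpc (hFp ▸ hc1I)
          · rw [hF] at hFp; simp only [if_neg hpc] at hFp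
            have hpT : p = T := TriProof.psi_inj
              (fun h => hpc (TriProof.mem_tri.mpr h)) hTsum (hFp.trans hpsi_T.symm)
            have hTI : T ∈ I := hpT ▸ hsI p hps hpc
            apply hneu
            apply Finset.eq_univ_iff_forall.2
            intro x
            refine hI T hTI x ?_
            rw [TriProof.le_iff_val, hTdef]
            have h1 := x.1.isLt; have h2 := x.2.isLt
            simp
            omega
      · refine ⟨c2, ?_, ?_⟩
        · rw [TriProof.mem_tri, hc2def]; simp; omega
        · intro p hps hFp
          by_cases hpc : p ∈ triangleIdeal r k
          · rw [hF] at hFp; simp only [if_pos hpc] at hFp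
            have hc2I : c2 ∈ I := by
              refine hI q₀ hq₀ c2 ?_
              rw [TriProof.le_iff_val, hc2def]
              simp
            exact hsC p hps hpc (hFp ▸ hc2I)
          · rw [hF] at hFp; simp only [if_neg hpc] at hFp
            have hpp2 : p = p2 := TriProof.psi_inj
              (fun h => hpc (TriProof.mem_tri.mpr h)) hp2sum (hFp.trans hpsi_p2.symm)
            exact hp2I (hpp2 ▸ hsI p hps hpc)
    obtain ⟨c, hcC, hmiss⟩ := key
    have hsub : Finset.image F s ⊆ triangleIdeal r k := by
      intro x hx
      obtain ⟨p, hps, rfl⟩ := Finset.mem_image.1 hx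
      exact hmaps p hps
    have hss : Finset.image F s ⊂ triangleIdeal r k := by
      rw [Finset.ssubset_iff_of_subset hsub]
      refine ⟨c, hcC, fun hmem => ?_⟩
      obtain ⟨p, hps, hFp⟩ := Finset.mem_image.1 hmem
      exact hmiss p hps hFp
    have hlt := Finset.card_lt_card hss
    rw [Finset.card_image_of_injOn hinj] at hlt
    linarith
  · rintro (rfl | rfl)
    · have : s = triangleIdeal r k := by
        rw [hs]; simp
      rw [this]; exact hcard2
    · have : s = Finset.univ \ triangleIdeal r k := by
        rw [hs]
        rw [Finset.sdiff_eq_empty_iff_subset.2 (Finset.subset_univ _)]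
        simp [Finset.union_comm]
      rw [this]
      linarith
end

section
/- Let r be a positive integer. For any two totally symmetric self-complementary ideals I and J of [2r]×[2r]×[2r], one has |I \ J| ≤ (r−1)r(2r−1)/2, and there exists a pair of totally symmetric self-complementary ideals attaining equality. Equivalently, since the distance between two TSSC ideals in the flip graph equals |I \ J|/3, the diameter of the flip graph on totally symmetric self-complementary ideals of [2r]³ equals (r−1)r(2r−1)/6. -/
open Finset

/-- The poset `[2r] × [2r] × [2r]`. -/
abbrev Box (r : ℕ) := Fin (2 * r) × Fin (2 * r) × Fin (2 * r)

/-- The order-reversing involution `(a₁,a₂,a₃) ↦ (2r+1-a₁, 2r+1-a₂, 2r+1-a₃)`. -/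
def boxRev (r : ℕ) (p : Box r) : Box r := (p.1.rev, p.2.1.rev, p.2.2.rev)

/-- A totally symmetric self-complementary (TSSC) ideal of `[2r]³`. -/
def IsTSSC (r : ℕ) (I : Finset (Box r)) : Prop :=
  IsSCIdeal (boxRev r) I ∧
    ∀ a b c : Fin (2 * r), (a, b, c) ∈ I →
      (a, c, b) ∈ I ∧ (b, a, c) ∈ I ∧ (b, c, a) ∈ I ∧ (c, a, b) ∈ I ∧ (c, b, a) ∈ I

-- ## auxiliary
lemma boxRev_invol (r : ℕ) (p : Box r) : boxRev r (boxRev r p) = p := by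
  simp [boxRev, Fin.rev_rev]

lemma mem_of_mid {r : ℕ} {I : Finset (Box r)} (hI : IsTSSC r I) (a b c : Fin (2*r))
    (h1 : (a:ℕ) + (c:ℕ) < 2*r) (h2 : (b:ℕ) < r) : (a, b, c) ∈ I := by
  by_contra hn
  have h3 : ((a.rev, b.rev, c.rev) : Box r) ∈ I := by
    have h := hI.1.2 ((a.rev, b.rev, c.rev) : Box r)
    rw [h]
    simpa [boxRev, Fin.rev_rev] using hn
  have h4 : ((c.rev, b.rev, a.rev) : Box r) ∈ I := (hI.2 _ _ _ h3).2.2.2.2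
  refine hn (hI.1.1 _ h4 (a, b, c) ?_)
  have ha := a.isLt; have hb := b.isLt; have hc := c.isLt
  rw [Prod.mk_le_mk, Prod.mk_le_mk]
  refine ⟨?_, ?_, ?_⟩ <;> rw [Fin.le_def, Fin.val_rev] <;> omega

lemma forced_mem {r : ℕ} {I : Finset (Box r)} (hI : IsTSSC r I) (a b c : Fin (2*r))
    (h : ((a:ℕ) + b < 2*r ∧ (c:ℕ) < r) ∨ ((a:ℕ) + c < 2*r ∧ (b:ℕ) < r) ∨
         ((b:ℕ) + c < 2*r ∧ (a:ℕ) < r)) : (a, b, c) ∈ I := by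
  rcases h with ⟨h1, h2⟩ | ⟨h1, h2⟩ | ⟨h1, h2⟩
  · exact (hI.2 _ _ _ (mem_of_mid hI a c b h1 h2)).1
  · exact mem_of_mid hI a b c h1 h2
  · exact (hI.2 _ _ _ (mem_of_mid hI b a c h1 h2)).2.1

-- ℕ-level predicates
def Qn (r u v w : ℕ) : Prop := u + v + 2 ≤ 2*r ∧ u + w + 2 ≤ 2*r ∧ r ≤ v ∧ r ≤ w
def Pbn (r x y z : ℕ) : Prop := Qn r x y z ∨ Qn r y x z ∨ Qn r z x y

instance (r u v w : ℕ) : Decidable (Qn r u v w) := by unfold Qn; infer_instance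
instance (r x y z : ℕ) : Decidable (Pbn r x y z) := by unfold Pbn; infer_instance
attribute [reducible] Qn Pbn

def P2 (A B C : Prop) : Prop := (A ∧ B) ∨ (A ∧ C) ∨ (B ∧ C)

instance (A B C : Prop) [Decidable A] [Decidable B] [Decidable C] : Decidable (P2 A B C) := by
  unfold P2; infer_instance
attribute [reducible] P2

def ZB (r : ℕ) : Finset (Box r) := univ.filter (fun p => Pbn r p.1 p.2.1 p.2.2)
def ZA (r : ℕ) : Finset (Box r) :=
  univ.filter (fun p => Pbn r (2*r - (p.1+1)) (2*r - (p.2.1+1)) (2*r - (p.2.2+1)))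

def I1 (r : ℕ) : Finset (Box r) :=
  univ.filter (fun p => P2 ((p.1:ℕ) < r) ((p.2.1:ℕ) < r) ((p.2.2:ℕ) < r))

def mnf (x y z : ℕ) : ℕ := min x (min y z)
def mxf (x y z : ℕ) : ℕ := max x (max y z)
def mdf (x y z : ℕ) : ℕ := x + y + z - mnf x y z - mxf x y z
attribute [reducible] mnf mxf mdf

def predI2 (r x y z : ℕ) : Prop :=
  mnf x y z + mxf x y z + 2 ≤ 2*r ∨ (mnf x y z + mxf x y z + 1 ≤ 2*r ∧ mdf x y z < r)

instance (r x y z : ℕ) : Decidable (predI2 r x y z) := by unfold predI2; infer_instance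
attribute [reducible] predI2

def I2 (r : ℕ) : Finset (Box r) := univ.filter (fun p => predI2 r p.1 p.2.1 p.2.2)

lemma mnf_mono {x y z x' y' z' : ℕ} (h1 : x' ≤ x) (h2 : y' ≤ y) (h3 : z' ≤ z) :
    mnf x' y' z' ≤ mnf x y z := by simp only [mnf]; omega
lemma mxf_mono {x y z x' y' z' : ℕ} (h1 : x' ≤ x) (h2 : y' ≤ y) (h3 : z' ≤ z) :
    mxf x' y' z' ≤ mxf x y z := by simp only [mxf]; omega
lemma mdf_mono {x y z x' y' z' : ℕ} (h1 : x' ≤ x) (h2 : y' ≤ y) (h3 : z' ≤ z) :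
    mdf x' y' z' ≤ mdf x y z := by simp only [mdf, mnf, mxf]; omega

lemma predI2_mono {r x y z x' y' z' : ℕ} (h1 : x' ≤ x) (h2 : y' ≤ y) (h3 : z' ≤ z)
    (h : predI2 r x y z) : predI2 r x' y' z' := by
  have a1 := mnf_mono h1 h2 h3
  have a2 := mxf_mono h1 h2 h3
  have a3 := mdf_mono h1 h2 h3
  unfold predI2 at h ⊢
  omega

lemma mnf_perm (x y z : ℕ) : mnf x z y = mnf x y z ∧ mnf y x z = mnf x y z ∧
    mnf y z x = mnf x y z ∧ mnf z x y = mnf x y z ∧ mnf z y x = mnf x y z := by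
  simp only [mnf]; omega
lemma mxf_perm (x y z : ℕ) : mxf x z y = mxf x y z ∧ mxf y x z = mxf x y z ∧
    mxf y z x = mxf x y z ∧ mxf z x y = mxf x y z ∧ mxf z y x = mxf x y z := by
  simp only [mxf]; omega
lemma mdf_perm (x y z : ℕ) : mdf x z y = mdf x y z ∧ mdf y x z = mdf x y z ∧
    mdf y z x = mdf x y z ∧ mdf z x y = mdf x y z ∧ mdf z y x = mdf x y z := by
  simp only [mdf, mnf, mxf]; omega

lemma predI2_perm {r x y z : ℕ} (h : predI2 r x y z) :
    predI2 r x z y ∧ predI2 r y x z ∧ predI2 r y z x ∧ predI2 r z x y ∧ predI2 r z y x := by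
  have a1 := mnf_perm x y z; have a2 := mxf_perm x y z; have a3 := mdf_perm x y z
  unfold predI2 at h ⊢
  refine ⟨?_, ?_, ?_, ?_, ?_⟩ <;>
    [rw [a1.1, a2.1, a3.1]; rw [a1.2.1, a2.2.1, a3.2.1]; rw [a1.2.2.1, a2.2.2.1, a3.2.2.1];
     rw [a1.2.2.2.1, a2.2.2.2.1, a3.2.2.2.1]; rw [a1.2.2.2.2, a2.2.2.2.2, a3.2.2.2.2]] <;>
    exact h

lemma mnf_rev {r x y z : ℕ} (hx : x < 2*r) (hy : y < 2*r) (hz : z < 2*r) :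
    mnf (2*r - (x+1)) (2*r - (y+1)) (2*r - (z+1)) = 2*r - 1 - mxf x y z := by
  simp only [mnf, mxf]; omega
lemma mxf_rev {r x y z : ℕ} (hx : x < 2*r) (hy : y < 2*r) (hz : z < 2*r) :
    mxf (2*r - (x+1)) (2*r - (y+1)) (2*r - (z+1)) = 2*r - 1 - mnf x y z := by
  simp only [mnf, mxf]; omega
lemma mdf_rev {r x y z : ℕ} (hx : x < 2*r) (hy : y < 2*r) (hz : z < 2*r) :
    mdf (2*r - (x+1)) (2*r - (y+1)) (2*r - (z+1)) = 2*r - 1 - mdf x y z := by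
  simp only [mdf, mnf, mxf]; omega

lemma predI2_rev {r x y z : ℕ} (hx : x < 2*r) (hy : y < 2*r) (hz : z < 2*r) :
    predI2 r x y z ↔ ¬ predI2 r (2*r - (x+1)) (2*r - (y+1)) (2*r - (z+1)) := by
  unfold predI2
  rw [mnf_rev hx hy hz, mxf_rev hx hy hz, mdf_rev hx hy hz]
  have b1 : mnf x y z ≤ mxf x y z := by simp only [mnf, mxf]; omega
  have b2 : mxf x y z < 2*r := by simp only [mxf]; omega
  have b3 : mdf x y z ≤ mxf x y z := by simp only [mdf, mnf, mxf]; omega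
  have b4 : mnf x y z ≤ mdf x y z := by simp only [mdf, mnf, mxf]; omega
  generalize mnf x y z = u at *
  generalize mxf x y z = v at *
  generalize mdf x y z = m at *
  omega

lemma I2_tssc (r : ℕ) : IsTSSC r (I2 r) := by
  refine ⟨⟨?_, ?_⟩, ?_⟩
  · rintro ⟨a, b, c⟩ ha ⟨x, y, z⟩ hx
    rw [Prod.mk_le_mk, Prod.mk_le_mk, Fin.le_def, Fin.le_def, Fin.le_def] at hx
    simp only [I2, mem_filter, mem_univ, true_and] at ha ⊢
    exact predI2_mono hx.1 hx.2.1 hx.2.2 ha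
  · rintro ⟨a, b, c⟩
    have ha := a.isLt; have hb := b.isLt; have hc := c.isLt
    simp only [I2, boxRev, mem_filter, mem_univ, true_and, Fin.val_rev]
    exact predI2_rev ha hb hc
  · intro a b c h
    simp only [I2, mem_filter, mem_univ, true_and] at h ⊢
    exact predI2_perm h

lemma I1_tssc (r : ℕ) : IsTSSC r (I1 r) := by
  refine ⟨⟨?_, ?_⟩, ?_⟩
  · rintro ⟨a, b, c⟩ ha ⟨x, y, z⟩ hx
    rw [Prod.mk_le_mk, Prod.mk_le_mk, Fin.le_def, Fin.le_def, Fin.le_def] at hx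
    simp only [I1, mem_filter, mem_univ, true_and, P2] at ha ⊢
    omega
  · rintro ⟨a, b, c⟩
    have ha := a.isLt; have hb := b.isLt; have hc := c.isLt
    simp only [I1, boxRev, mem_filter, mem_univ, true_and, P2, Fin.val_rev]
    omega
  · intro a b c h
    simp only [I1, mem_filter, mem_univ, true_and, P2] at h ⊢
    omega

set_option maxHeartbeats 2000000 in
lemma I2_sdiff_I1 (r : ℕ) : I2 r \ I1 r = ZB r := by
  ext ⟨a, b, c⟩
  have ha := a.isLt; have hb := b.isLt; have hc := c.isLt
  simp only [mem_sdiff, I1, I2, ZB, mem_filter, mem_univ, true_and, P2, Pbn, Qn,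
    predI2, mdf, mnf, mxf]
  omega

-- ## counting
lemma card_fin_filter (n : ℕ) (P : ℕ → Prop) [DecidablePred P] :
    (univ.filter (fun v : Fin n => P v)).card = ((range n).filter P).card := by
  refine Finset.card_bij (fun v _ => (v : ℕ)) ?_ ?_ ?_
  · intro v hv; simp only [mem_filter, mem_univ, true_and] at hv
    simp [mem_filter, mem_range, v.isLt, hv]
  · intro a _ b _ h; exact Fin.val_injective h
  · intro b hb; simp only [mem_filter, mem_range] at hb
    exact ⟨⟨b, hb.1⟩, by simp [hb.2], rfl⟩

lemma card_T (r u : ℕ) :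
    (univ.filter (fun v : Fin (2*r) => u + (v:ℕ) + 2 ≤ 2*r ∧ r ≤ (v:ℕ))).card
      = r - 1 - u := by
  rw [card_fin_filter (2*r) (fun v => u + v + 2 ≤ 2*r ∧ r ≤ v)]
  have h : (range (2*r)).filter (fun v => u + v + 2 ≤ 2*r ∧ r ≤ v)
      = Ico r (2*r - 1 - u) := by
    ext v; simp only [mem_filter, mem_range, mem_Ico]; omega
  rw [h, Nat.card_Ico]; omega

def B1 (r : ℕ) : Finset (Box r) := univ.filter (fun p => Qn r p.1 p.2.1 p.2.2)

lemma card_B1 (r : ℕ) :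
    (B1 r).card = ∑ u ∈ range (2*r), (r - 1 - u) * (r - 1 - u) := by
  rw [Finset.card_eq_sum_card_fiberwise (f := Prod.fst) (t := univ) (fun x _ => mem_univ _)]
  rw [← Fin.sum_univ_eq_sum_range]
  refine Finset.sum_congr rfl ?_
  intro u _
  have h : (B1 r).filter (fun p => p.1 = u)
      = {u} ×ˢ ((univ.filter (fun v : Fin (2*r) => (u:ℕ) + (v:ℕ) + 2 ≤ 2*r ∧ r ≤ (v:ℕ))) ×ˢ
          (univ.filter (fun v : Fin (2*r) => (u:ℕ) + (v:ℕ) + 2 ≤ 2*r ∧ r ≤ (v:ℕ)))) := by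
    ext ⟨a, b, c⟩
    simp only [B1, Qn, mem_filter, mem_univ, true_and, mem_product, mem_singleton]
    constructor
    · rintro ⟨⟨h1, h2, h3, h4⟩, rfl⟩; exact ⟨rfl, ⟨h1, h3⟩, ⟨h2, h4⟩⟩
    · rintro ⟨rfl, ⟨h1, h3⟩, ⟨h2, h4⟩⟩; exact ⟨⟨h1, h2, h3, h4⟩, rfl⟩
  rw [h, card_product, card_product, card_singleton, card_T, one_mul]

lemma card_ZB (r : ℕ) :
    (ZB r).card = 3 * ∑ u ∈ range (2*r), (r - 1 - u) * (r - 1 - u) := by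
  classical
  have hsplit : ZB r = B1 r ∪ ((univ.filter (fun p : Box r => Qn r p.2.1 p.1 p.2.2)) ∪
      (univ.filter (fun p : Box r => Qn r p.2.2 p.1 p.2.1))) := by
    ext ⟨a, b, c⟩
    simp only [ZB, B1, Pbn, Qn, mem_filter, mem_univ, true_and, mem_union]
  have hd1 : Disjoint (B1 r) ((univ.filter (fun p : Box r => Qn r p.2.1 p.1 p.2.2)) ∪
      (univ.filter (fun p : Box r => Qn r p.2.2 p.1 p.2.1))) := by
    rw [Finset.disjoint_left]
    rintro ⟨a, b, c⟩ h1 h2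
    simp only [B1, Qn, mem_filter, mem_univ, true_and, mem_union] at h1 h2
    omega
  have hd2 : Disjoint (univ.filter (fun p : Box r => Qn r p.2.1 p.1 p.2.2))
      (univ.filter (fun p : Box r => Qn r p.2.2 p.1 p.2.1)) := by
    rw [Finset.disjoint_left]
    rintro ⟨a, b, c⟩ h1 h2
    simp only [Qn, mem_filter, mem_univ, true_and] at h1 h2
    omega
  rw [hsplit, card_union_of_disjoint hd1, card_union_of_disjoint hd2]
  have e2 : (univ.filter (fun p : Box r => Qn r p.2.1 p.1 p.2.2)).card = (B1 r).card := by
    refine Finset.card_bij' (fun p _ => (p.2.1, p.1, p.2.2)) (fun p _ => (p.2.1, p.1, p.2.2))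
      ?_ ?_ ?_ ?_
    · rintro ⟨a, b, c⟩ h; simpa [B1, mem_filter] using h
    · rintro ⟨a, b, c⟩ h; simpa [B1, mem_filter] using h
    · rintro ⟨a, b, c⟩ _; rfl
    · rintro ⟨a, b, c⟩ _; rfl
  have e3 : (univ.filter (fun p : Box r => Qn r p.2.2 p.1 p.2.1)).card = (B1 r).card := by
    refine Finset.card_bij' (fun p _ => (p.2.2, p.1, p.2.1)) (fun p _ => (p.2.1, p.2.2, p.1))
      ?_ ?_ ?_ ?_
    · rintro ⟨a, b, c⟩ h
      simp only [B1, Qn, mem_filter, mem_univ, true_and] at h ⊢; tauto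
    · rintro ⟨a, b, c⟩ h
      simp only [B1, Qn, mem_filter, mem_univ, true_and] at h ⊢; tauto
    · rintro ⟨a, b, c⟩ _; rfl
    · rintro ⟨a, b, c⟩ _; rfl
  rw [e2, e3, card_B1]; ring

lemma six_sum_sq : ∀ m : ℕ, 6 * ∑ k ∈ range m, k * k = (m - 1) * m * (2 * m - 1) := by
  intro m
  induction m with
  | zero => simp
  | succ s ih =>
    rw [Finset.sum_range_succ, Nat.mul_add, ih]
    cases s with
    | zero => simp
    | succ t =>
      have : (t + 1 + 1 - 1) * (t + 1 + 1) * (2 * (t + 1 + 1) - 1)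
          = (t + 1 - 1) * (t + 1) * (2 * (t + 1) - 1) + 6 * ((t + 1) * (t + 1)) := by
        simp only [Nat.add_sub_cancel]
        have h1 : 2 * (t + 1 + 1) - 1 = 2 * t + 3 := by omega
        have h2 : 2 * (t + 1) - 1 = 2 * t + 1 := by omega
        rw [h1, h2]; ring
      omega

lemma two_card_ZB (r : ℕ) : 2 * (ZB r).card = (r - 1) * r * (2 * r - 1) := by
  rw [card_ZB]
  have h1 : ∑ u ∈ range (2*r), (r - 1 - u) * (r - 1 - u)
      = ∑ u ∈ range r, (r - 1 - u) * (r - 1 - u) := by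
    refine (Finset.sum_subset (by rw [range_subset_range]; omega) ?_).symm
    intro x hx hx'
    simp only [mem_range] at hx hx'
    have : r - 1 - x = 0 := by omega
    simp [this]
  rw [h1, Finset.sum_range_reflect (fun k => k * k) r]
  have := six_sum_sq r
  omega

-- ## upper bound machinery
lemma card_ZA (r : ℕ) : (ZA r).card = (ZB r).card := by
  refine Finset.card_bij' (fun p _ => boxRev r p) (fun p _ => boxRev r p) ?_ ?_ ?_ ?_
  · rintro ⟨a, b, c⟩ h
    have ha := a.isLt; have hb := b.isLt; have hc := c.isLt
    simp only [ZA, ZB, boxRev, mem_filter, mem_univ, true_and, Fin.val_rev] at h ⊢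
    exact h
  · rintro ⟨a, b, c⟩ h
    have ha := a.isLt; have hb := b.isLt; have hc := c.isLt
    simp only [ZA, ZB, boxRev, mem_filter, mem_univ, true_and, Fin.val_rev, Pbn, Qn] at h ⊢
    omega
  · intro p _; exact boxRev_invol r p
  · intro p _; exact boxRev_invol r p

lemma disj_ZA_ZB (r : ℕ) : Disjoint (ZA r) (ZB r) := by
  rw [Finset.disjoint_left]
  rintro ⟨a, b, c⟩ h1 h2
  have ha := a.isLt; have hb := b.isLt; have hc := c.isLt
  simp only [ZA, ZB, mem_filter, mem_univ, true_and, Pbn, Qn] at h1 h2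
  omega

lemma sdiff_subset_Z {r : ℕ} {I J : Finset (Box r)} (hI : IsTSSC r I) (hJ : IsTSSC r J) :
    I \ J ⊆ ZA r ∪ ZB r := by
  rintro ⟨a, b, c⟩ hp
  rw [mem_sdiff] at hp
  have ha := a.isLt; have hb := b.isLt; have hc := c.isLt
  have hFI : ¬ (((a:ℕ) + b < 2*r ∧ (c:ℕ) < r) ∨ ((a:ℕ) + c < 2*r ∧ (b:ℕ) < r) ∨
      ((b:ℕ) + c < 2*r ∧ (a:ℕ) < r)) := fun h => hp.2 (forced_mem hJ a b c h)
  have hFO : ¬ (((a.rev:ℕ) + b.rev < 2*r ∧ (c.rev:ℕ) < r) ∨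
      ((a.rev:ℕ) + c.rev < 2*r ∧ (b.rev:ℕ) < r) ∨
      ((b.rev:ℕ) + c.rev < 2*r ∧ (a.rev:ℕ) < r)) := by
    intro h
    have hmem : ((a.rev, b.rev, c.rev) : Box r) ∈ I := forced_mem hI a.rev b.rev c.rev h
    have := (hI.1.2 (a, b, c)).mp hp.1
    exact this hmem
  rw [Fin.val_rev, Fin.val_rev, Fin.val_rev] at hFO
  rw [mem_union]
  simp only [ZA, ZB, mem_filter, mem_univ, true_and, Pbn, Qn]
  rcases Nat.lt_or_ge (a:ℕ) r with h4 | h4 <;>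
    rcases Nat.lt_or_ge (b:ℕ) r with h5 | h5 <;>
    rcases Nat.lt_or_ge (c:ℕ) r with h6 | h6
  · omega
  · exact Or.inl (Or.inr (Or.inr (by omega)))
  · exact Or.inl (Or.inr (Or.inl (by omega)))
  · exact Or.inr (Or.inl (by omega))
  · exact Or.inl (Or.inl (by omega))
  · exact Or.inr (Or.inr (Or.inl (by omega)))
  · exact Or.inr (Or.inr (Or.inr (by omega)))
  · omega

theorem tssc_diameter' (r : ℕ) (hr : 0 < r) :
    (∀ I J : Finset (Box r), IsTSSC r I → IsTSSC r J →
      2 * (I \ J).card ≤ (r - 1) * r * (2 * r - 1)) ∧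
    (∃ I J : Finset (Box r), IsTSSC r I ∧ IsTSSC r J ∧
      2 * (I \ J).card = (r - 1) * r * (2 * r - 1)) := by
  constructor
  · intro I J hI hJ
    have himg : (I \ J).image (boxRev r) ⊆ J \ I := by
      intro q hq
      rw [Finset.mem_image] at hq
      obtain ⟨p, hp, rfl⟩ := hq
      rw [mem_sdiff] at hp ⊢
      constructor
      · exact not_not.mp (fun hn => hp.2 ((hJ.1.2 p).mpr hn))
      · exact (hI.1.2 p).mp hp.1
    have hcard : ((I \ J).image (boxRev r)).card = (I \ J).card :=
      Finset.card_image_of_injective _ (Function.Involutive.injective (boxRev_invol r))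
    have hdisj : Disjoint (I \ J) ((I \ J).image (boxRev r)) := by
      refine Finset.disjoint_left.mpr ?_
      intro p hp hp2
      have := himg hp2
      rw [mem_sdiff] at hp this
      exact this.2 hp.1
    have hsub : (I \ J) ∪ (I \ J).image (boxRev r) ⊆ ZA r ∪ ZB r := by
      refine Finset.union_subset (sdiff_subset_Z hI hJ) ?_
      exact fun p hp => sdiff_subset_Z hJ hI (himg hp)
    calc 2 * (I \ J).card = (I \ J).card + ((I \ J).image (boxRev r)).card := by omega
    _ = ((I \ J) ∪ (I \ J).image (boxRev r)).card := (card_union_of_disjoint hdisj).symm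
    _ ≤ (ZA r ∪ ZB r).card := Finset.card_le_card hsub
    _ = (ZA r).card + (ZB r).card := card_union_of_disjoint (disj_ZA_ZB r)
    _ = 2 * (ZB r).card := by rw [card_ZA]; omega
    _ = (r - 1) * r * (2 * r - 1) := two_card_ZB r
  · exact ⟨I2 r, I1 r, I2_tssc r, I1_tssc r, by rw [I2_sdiff_I1]; exact two_card_ZB r⟩

/-- Any two totally symmetric self-complementary ideals `I`, `J` of `[2r]³` satisfy
`|I \ J| ≤ (r-1)r(2r-1)/2`, and some pair of TSSC ideals attains equality.
(Since the distance between TSSC ideals in the flip graph is `|I \ J|/3`, this says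
the diameter of the flip graph on TSSC ideals equals `(r-1)r(2r-1)/6`.) -/
theorem tssc_diameter (r : ℕ) (hr : 0 < r) :
    (∀ I J : Finset (Box r), IsTSSC r I → IsTSSC r J →
      2 * (I \ J).card ≤ (r - 1) * r * (2 * r - 1)) ∧
    (∃ I J : Finset (Box r), IsTSSC r I ∧ IsTSSC r J ∧
      2 * (I \ J).card = (r - 1) * r * (2 * r - 1)) := by
  exact tssc_diameter' r hr
end
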